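/- There exists r ∈ ℝ^d with gᵀr + (1/2)·rᵀHr ≥ c and ‖r‖ ≤ (|gᵀu|/ν)·(√(1 + 2νc/(gᵀu)²) − 1). Concretely, r = α·u works, where α has the same sign as gᵀu and |α| = (|gᵀu|/ν)·(√(1 + 2νc/(gᵀu)²) − 1). (Upper bound of Theorem 1.) -/
import Mathlib


open Matrix

/-- Upper bound of Theorem 1: there exists a perturbation `r` that fools the
quadratically-approximated classifier with
`‖r‖ ≤ (|gᵀu|/ν)·(√(1 + 2νc/(gᵀu)²) − 1)`; concretely `r = α·u` works, where `α` has the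
same sign as `gᵀu` and `|α| = (|gᵀu|/ν)·(√(1 + 2νc/(gᵀu)²) − 1)`. -/
theorem upper_bound_robustness {d : ℕ} (H : Matrix (Fin d) (Fin d) ℝ) (hH : H.IsSymm)
    (ν : ℝ) (hν : 0 < ν) (u : EuclideanSpace ℝ (Fin d))
    (hu : H.mulVec u = ν • (u : Fin d → ℝ)) (hu1 : ‖u‖ = 1)
    (g : EuclideanSpace ℝ (Fin d)) (hgu : g ⬝ᵥ u ≠ 0) (c : ℝ) (hc : 0 ≤ c) :
    ∃ r : EuclideanSpace ℝ (Fin d),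
      r = (Real.sign (g ⬝ᵥ u) *
            (|g ⬝ᵥ u| / ν * (Real.sqrt (1 + 2 * ν * c / (g ⬝ᵥ u) ^ 2) - 1))) • u ∧
      g ⬝ᵥ r + (1 / 2) * (r ⬝ᵥ H.mulVec r) ≥ c ∧
      ‖r‖ ≤ |g ⬝ᵥ u| / ν * (Real.sqrt (1 + 2 * ν * c / (g ⬝ᵥ u) ^ 2) - 1) := by
  set s : ℝ := g ⬝ᵥ u with hs
  set T : ℝ := 1 + 2 * ν * c / s ^ 2 with hT
  have hT1 : 1 ≤ T := by
    have : 0 ≤ 2 * ν * c / s ^ 2 := by positivity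
    simp only [hT]; linarith
  have hsqrt : Real.sqrt T ^ 2 = T := Real.sq_sqrt (by linarith)
  have hsqrt1 : 1 ≤ Real.sqrt T := by
    nlinarith [Real.sqrt_nonneg T]
  set α : ℝ := Real.sign s * (|s| / ν * (Real.sqrt T - 1)) with hα
  refine ⟨α • u, rfl, ?_, ?_⟩
  · -- fooling condition
    have huu : (u : Fin d → ℝ) ⬝ᵥ u = 1 := by
      have := hu1
      rw [EuclideanSpace.norm_eq] at this
      have h2 : Real.sqrt (∑ i, u i ^ 2) = 1 := by
        simpa [sq_abs] using this
      have : (∑ i, u i ^ 2) = 1 := by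
        nlinarith [Real.sq_sqrt (show (0:ℝ) ≤ ∑ i, u i ^ 2 by positivity),
          Real.sqrt_nonneg (∑ i, u i ^ 2)]
      simpa [dotProduct, pow_two] using this
    have hsmul : ((α • u : EuclideanSpace ℝ (Fin d)) : Fin d → ℝ) = α • (u : Fin d → ℝ) := rfl
    have hdot1 : g ⬝ᵥ (α • u : EuclideanSpace ℝ (Fin d)) = α * s := by
      rw [hsmul, dotProduct_smul, smul_eq_mul, hs]
    have hdot2 : (α • u : EuclideanSpace ℝ (Fin d)) ⬝ᵥ
        H.mulVec (α • u : EuclideanSpace ℝ (Fin d)) = α ^ 2 * ν := by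
      rw [hsmul, mulVec_smul, hu, smul_dotProduct, dotProduct_smul, dotProduct_smul,
        smul_eq_mul, smul_eq_mul, smul_eq_mul, huu]
      ring
    rw [hdot1, hdot2]
    have hsign : Real.sign s * s = |s| := by
      rcases lt_or_gt_of_ne hgu with h | h
      · rw [Real.sign_of_neg h, abs_of_neg h]; ring
      · rw [Real.sign_of_pos h, abs_of_pos h]; ring
    have hsignsq : Real.sign s ^ 2 = 1 := by
      rcases lt_or_gt_of_ne hgu with h | h
      · rw [Real.sign_of_neg h]; ring
      · rw [Real.sign_of_pos h]; ring
    have hαs : α * s = s ^ 2 / ν * (Real.sqrt T - 1) := by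
      have h1 : α * s = (Real.sign s * s) * |s| * (Real.sqrt T - 1) / ν := by rw [hα]; ring
      rw [h1, hsign, ← sq_abs s]
      ring
    have hα2 : α ^ 2 = s ^ 2 / ν ^ 2 * (Real.sqrt T - 1) ^ 2 := by
      rw [hα, mul_pow, hsignsq, mul_pow, div_pow, sq_abs]
      ring
    have hs2 : s ^ 2 ≠ 0 := pow_ne_zero 2 hgu
    have hνne : (ν : ℝ) ≠ 0 := ne_of_gt hν
    have key : α * s + 1 / 2 * (α ^ 2 * ν) = c := by
      rw [hαs, hα2]
      obtain ⟨q, hq⟩ : ∃ q, q = Real.sqrt T := ⟨_, rfl⟩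
      rw [← hq] at hsqrt ⊢
      have e1 : s ^ 2 / ν * (q - 1)
          + 1 / 2 * (s ^ 2 / ν ^ 2 * (q - 1) ^ 2 * ν)
          = s ^ 2 / (2 * ν) * (q ^ 2 - 1) := by
        field_simp
        ring
      rw [e1, hsqrt, hT]
      field_simp
      ring
    linarith [key.ge]
  · rw [norm_smul, hu1, mul_one]
    have : ‖α‖ = |α| := rfl
    rw [this, hα, abs_mul]
    have : |Real.sign s| = 1 := by
      rcases lt_or_gt_of_ne hgu with h | h
      · rw [Real.sign_of_neg h]; norm_num
      · rw [Real.sign_of_pos h]; norm_num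
    rw [this, one_mul, abs_of_nonneg]
    exact mul_nonneg (by positivity) (by linarith)
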